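/- Let h : 𝔻 → ℝ be harmonic with |h| ≤ 1 and |h(0)| ≤ a := 2α/(1+α) for a fixed α ∈ (0,1). Then |h(α)| ≤ 4α/(1+α)². -/

import Mathlib

open Metric Set Complex Filter

lemma clm_decomp (F : Type*) [NormedAddCommGroup F] [NormedSpace ℝ F]
    (L : ℂ →L[ℝ] F) (z : ℂ) : L z = z.re • L 1 + z.im • L Complex.I := by
  have hz : z = z.re • (1 : ℂ) + z.im • Complex.I := by
    simp only [Complex.real_smul, mul_one]; exact (Complex.re_add_im z).symm
  conv_lhs => rw [hz]
  rw [map_add, map_smul, map_smul]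

/-- A real-linear map `ℂ → ℂ` satisfying the Cauchy–Riemann condition is multiplication. -/
lemma clm_eq_mul (L : ℂ →L[ℝ] ℂ) (hL : L Complex.I = Complex.I * L 1) (z : ℂ) :
    L z = z * L 1 := by
  rw [clm_decomp ℂ L z, hL]
  simp only [Complex.real_smul]
  linear_combination (Complex.re_add_im z) * (L 1)

/-- A real-linear map `ℂ → ℝ` vanishing on `1` and `I` is zero. -/
lemma clm_eq_zero (L : ℂ →L[ℝ] ℝ) (h1 : L 1 = 0) (hI : L Complex.I = 0) : L = 0 := by
  ext1 z
  rw [clm_decomp ℝ L z, h1, hI]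
  simp


/-- A real-valued function on an open subset of `ℂ` is harmonic if it is `C²` there and
its Laplacian `∂²h/∂x² + ∂²h/∂y²` vanishes. -/
def HarmonicOnSet (h : ℂ → ℝ) (V : Set ℂ) : Prop :=
  ContDiffOn ℝ 2 h V ∧ ∀ z ∈ V,
    fderiv ℝ (fun w => fderiv ℝ h w 1) z 1
      + fderiv ℝ (fun w => fderiv ℝ h w Complex.I) z Complex.I = 0

noncomputable def gradC (h : ℂ → ℝ) : ℂ → ℂ :=
  fun z => (fderiv ℝ h z 1 : ℂ) - Complex.I * (fderiv ℝ h z Complex.I : ℂ)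

noncomputable def phiCLM : (ℂ →L[ℝ] ℝ) →L[ℝ] ℂ :=
  Complex.ofRealCLM.comp (ContinuousLinearMap.apply ℝ ℝ (1 : ℂ))
    - Complex.I • (Complex.ofRealCLM.comp (ContinuousLinearMap.apply ℝ ℝ (Complex.I : ℂ)))

lemma phiCLM_apply (L : ℂ →L[ℝ] ℝ) : phiCLM L = (L 1 : ℂ) - Complex.I * (L Complex.I : ℂ) := by
  simp [phiCLM, Complex.real_smul, mul_comm]

lemma gradC_hasDerivAt (h : ℂ → ℝ) (hh : HarmonicOnSet h (Metric.ball (0 : ℂ) 1))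
    {z : ℂ} (hz : z ∈ Metric.ball (0 : ℂ) 1) :
    ∃ c, HasDerivAt (gradC h) c z := by
  have hop : IsOpen (Metric.ball (0 : ℂ) 1) := isOpen_ball
  have hC1 : ContDiffOn ℝ 1 (fderiv ℝ h) (Metric.ball (0 : ℂ) 1) :=
    hh.1.fderiv_of_isOpen hop (by norm_num)
  have hDh : DifferentiableAt ℝ (fderiv ℝ h) z :=
    ((hC1.differentiableOn one_ne_zero) z hz).differentiableAt (hop.mem_nhds hz)
  set A := fderiv ℝ (fderiv ℝ h) z with hA
  have HA : HasFDerivAt (fderiv ℝ h) A z := hDh.hasFDerivAt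
  -- eventual differentiability of h
  have hev : ∀ᶠ y in nhds z, HasFDerivAt h (fderiv ℝ h y) y := by
    filter_upwards [hop.mem_nhds hz] with y hy
    exact (((hh.1.differentiableOn (by norm_num)) y hy).differentiableAt
      (hop.mem_nhds hy)).hasFDerivAt
  have hsymm : ∀ v w : ℂ, A v w = A w v :=
    second_derivative_symmetric_of_eventually_of_real hev HA
  -- harmonic equation in terms of A
  have hA2 : ∀ a : ℂ, HasFDerivAt (fun w => fderiv ℝ h w a)
      ((ContinuousLinearMap.apply ℝ ℝ a).comp A) z :=
    fun a => (ContinuousLinearMap.apply ℝ ℝ a).hasFDerivAt.comp z HA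
  have hharm : A 1 1 + A Complex.I Complex.I = 0 := by
    have h1 := (hA2 1).fderiv
    have h2 := (hA2 Complex.I).fderiv
    have := hh.2 z hz
    rw [h1, h2] at this
    simpa using this
  -- the real derivative of gradC h at z
  have hg : HasFDerivAt (gradC h) (phiCLM.comp A) z := by
    have : gradC h = fun w => phiCLM (fderiv ℝ h w) := by
      funext w; rw [phiCLM_apply]; rfl
    rw [this]
    exact phiCLM.hasFDerivAt.comp z HA
  set L := phiCLM.comp A with hLdef
  have hCR : L Complex.I = Complex.I * L 1 := by
    have e1 : L 1 = (A 1 1 : ℂ) - Complex.I * (A 1 Complex.I : ℂ) := by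
      simp [hLdef, phiCLM_apply]
    have eI : L Complex.I = (A Complex.I 1 : ℂ) - Complex.I * (A Complex.I Complex.I : ℂ) := by
      simp [hLdef, phiCLM_apply]
    rw [e1, eI, hsymm Complex.I 1]
    have hAI : A Complex.I Complex.I = -(A 1 1) := by linarith [hharm]
    rw [hAI]
    push_cast
    linear_combination ((A 1 Complex.I : ℝ) : ℂ) * Complex.I_sq
  refine ⟨L 1, ?_⟩
  rw [hasDerivAt_iff_hasFDerivAt]
  refine hasFDerivAt_of_restrictScalars ℝ hg ?_
  ext v
  simp only [ContinuousLinearMap.coe_restrictScalars', ContinuousLinearMap.smulRight_apply,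
    ContinuousLinearMap.one_apply]
  rw [clm_eq_mul L hCR v, ContinuousLinearMap.toSpanSingleton_apply, smul_eq_mul, mul_comm]


lemma exists_primitive {g : ℂ → ℂ} {r r' : ℝ} (h0 : 0 < r) (hrr' : r < r')
    (hg : DifferentiableOn ℂ g (Metric.closedBall (0 : ℂ) r')) :
    ∃ F : ℂ → ℂ, ∀ z ∈ Metric.ball (0 : ℂ) r, HasDerivAt F (g z) z := by
  have hr'0 : 0 < r' := h0.trans hrr'
  set R' : NNReal := ⟨r', hr'0.le⟩ with hR'
  have hgd : DifferentiableOn ℂ g (Metric.closedBall (0 : ℂ) (R' : ℝ)) := hg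
  have P := hgd.hasFPowerSeriesOnBall (by exact_mod_cast hr'0)
  set p := cauchyPowerSeries g 0 R' with hp
  set b : ℕ → ℂ := fun n => p.coeff n with hb
  set R : NNReal := ⟨r, h0.le⟩ with hR
  have hrad : (R : ENNReal) < p.radius := by
    refine lt_of_lt_of_le ?_ P.r_le
    exact_mod_cast hrr'
  have hu : Summable (fun n => ‖p n‖ * (r : ℝ) ^ n) := by
    have := p.summable_norm_mul_pow hrad
    rw [show ((R : ℝ)) = r from rfl] at this
    simpa using this
  set G : ℕ → ℂ → ℂ := fun n z => ((n : ℂ) + 1)⁻¹ * b n * z ^ (n + 1) with hG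
  set G' : ℕ → ℂ → ℂ := fun n z => b n * z ^ n with hG'
  have hder : ∀ n z, HasDerivAt (G n) (G' n z) z := by
    intro n z
    have h1 : HasDerivAt (fun z : ℂ => z ^ (n + 1)) (((n : ℂ) + 1) * z ^ n) z := by
      simpa using hasDerivAt_pow (n + 1) z
    have := h1.const_mul (((n : ℂ) + 1)⁻¹ * b n)
    refine this.congr_deriv ?_
    have hne : ((n : ℂ) + 1) ≠ 0 := Nat.cast_add_one_ne_zero n
    simp only [hG']
    linear_combination (b n * z ^ n) * inv_mul_cancel₀ hne
  have hbnd : ∀ n, ∀ z ∈ Metric.ball (0 : ℂ) r, ‖G' n z‖ ≤ ‖p n‖ * r ^ n := by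
    intro n z hz
    have hbn : ‖b n‖ ≤ ‖p n‖ := by
      have := (p n).le_opNorm (fun _ => (1 : ℂ))
      rw [hb]
      show ‖p n 1‖ ≤ ‖p n‖
      have h2 := (p n).le_opNorm (1 : Fin n → ℂ)
      simpa using h2
    have hzn : ‖z‖ ≤ r := (mem_ball_zero_iff.mp hz).le
    calc ‖G' n z‖ = ‖b n‖ * ‖z‖ ^ n := by simp [hG', norm_pow]
      _ ≤ ‖p n‖ * r ^ n := by
          have h1 : ‖z‖ ^ n ≤ r ^ n := pow_le_pow_left₀ (norm_nonneg z) hzn n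
          exact mul_le_mul hbn h1 (pow_nonneg (norm_nonneg z) n) (norm_nonneg _)
  refine ⟨fun z => ∑' n, G n z, fun z hz => ?_⟩
  have hmem0 : (0 : ℂ) ∈ Metric.ball (0 : ℂ) r := mem_ball_self h0
  have hsum0 : Summable (fun n => G n 0) := by
    have : (fun n => G n 0) = fun _ => (0 : ℂ) := by
      funext n; simp [hG]
    rw [this]; exact summable_zero
  have key := hasDerivAt_tsum_of_isPreconnected hu isOpen_ball
    (convex_ball (0 : ℂ) r).isPreconnected
    (fun n y _ => hder n y) hbnd hmem0 hsum0 hz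
  refine key.congr_deriv (Eq.symm ?_)
  have hzball : z ∈ Metric.eball (0 : ℂ) (R' : ENNReal) := by
    rw [Metric.emetric_ball_nnreal]
    exact Metric.ball_subset_ball hrr'.le hz
  have hs := P.hasSum hzball
  simp only [zero_add] at hs
  have : (fun n => (p n) fun _ => z) = fun n => G' n z := by
    funext n
    rw [FormalMultilinearSeries.apply_eq_pow_smul_coeff, smul_eq_mul]
    simp [hG', hb, mul_comm]
  rw [this] at hs
  exact hs.tsum_eq.symm

lemma harnack_halfplane {w : ℂ → ℂ} {r : ℝ} (hr : 0 < r)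
    (hw : DifferentiableOn ℂ w (Metric.ball (0 : ℂ) r))
    (hre : ∀ z ∈ Metric.ball (0 : ℂ) r, 0 ≤ (w z).re)
    {α : ℝ} (hα0 : 0 ≤ α) (hαr : α < r) :
    (w 0).re * ((r - α) / (r + α)) ≤ (w (α : ℂ)).re := by
  have h0mem : (0 : ℂ) ∈ Metric.ball (0 : ℂ) r := mem_ball_self hr
  have hαmem : (α : ℂ) ∈ Metric.ball (0 : ℂ) r := by
    rw [mem_ball_zero_iff, Complex.norm_real, Real.norm_eq_abs, _root_.abs_of_nonneg hα0]; exact hαr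
  set w₀ := w 0 with hw₀
  set β := w₀.re with hβ
  have hβ0 : 0 ≤ β := hre 0 h0mem
  rcases eq_or_lt_of_le hβ0 with hβeq | hβpos
  · rw [← hβeq]
    simpa using hre _ hαmem
  have hden : ∀ z ∈ Metric.ball (0 : ℂ) r, w z + (starRingEnd ℂ) w₀ ≠ 0 := by
    intro z hz hcon
    have h1 : (w z + (starRingEnd ℂ) w₀).re = (w z).re + β := by
      simp [hβ, Complex.add_re, Complex.conj_re]
    rw [hcon] at h1
    simp only [Complex.zero_re] at h1
    nlinarith [hre z hz]
  set q : ℂ → ℂ := fun z => (w z - w₀) / (w z + (starRingEnd ℂ) w₀) with hq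
  have hq0 : q 0 = 0 := by simp [hq, hw₀]
  have hqd : DifferentiableOn ℂ q (Metric.ball (0 : ℂ) r) :=
    (hw.sub (differentiableOn_const _)).div
      (hw.add (differentiableOn_const _)) hden
  have hnormsq : ∀ z : ℂ,
      Complex.normSq (w z + (starRingEnd ℂ) w₀)
        = Complex.normSq (w z - w₀) + 4 * β * (w z).re := by
    intro z
    simp only [Complex.normSq_apply, Complex.sub_re, Complex.sub_im, Complex.add_re,
      Complex.add_im, Complex.conj_re, Complex.conj_im, hβ]
    ring
  have hqle : ∀ z ∈ Metric.ball (0 : ℂ) r, ‖q z‖ ≤ 1 := by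
    intro z hz
    rw [hq]
    simp only [norm_div]
    rw [div_le_one (norm_pos_iff.mpr (hden z hz))]
    rw [Complex.norm_def, Complex.norm_def]
    apply Real.sqrt_le_sqrt
    rw [hnormsq z]
    nlinarith [hre z hz]
  -- Schwarz lemma with radius 1 + ε, then ε → 0
  have hschwarz : ∀ ε : ℝ, 0 < ε → ‖q (α : ℂ)‖ ≤ (1 + ε) / r * α := by
    intro ε hε
    have hmaps : Set.MapsTo q (Metric.ball (0 : ℂ) r) (Metric.ball (q 0) (1 + ε)) := by
      intro z hz
      rw [hq0, mem_ball_zero_iff]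
      calc ‖q z‖ ≤ 1 := hqle z hz
        _ < 1 + ε := by linarith
    have := Complex.dist_le_div_mul_dist_of_mapsTo_ball hqd (hmaps.mono_right ball_subset_closedBall) hαmem
    rw [hq0] at this
    simpa [Complex.dist_eq, _root_.abs_of_nonneg hα0] using this
  have hqα : ‖q (α : ℂ)‖ ≤ α / r := by
    rcases eq_or_lt_of_le hα0 with h0α | h0α
    · rw [← h0α]
      simp [← h0α, hq0]
    · refine le_of_forall_pos_le_add fun δ hδ => ?_
      have := hschwarz (δ * r / α) (by positivity)
      calc ‖q (α : ℂ)‖ ≤ (1 + δ * r / α) / r * α := this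
        _ = α / r + δ := by field_simp
  set s := ‖q (α : ℂ)‖ with hs
  have hs0 : 0 ≤ s := norm_nonneg _
  have hslt : s < 1 := lt_of_le_of_lt hqα (by rw [div_lt_one hr]; exact hαr)
  -- identity : w α * (1 - q α) = w₀ + conj w₀ * q α
  have hkey : w (α : ℂ) * (1 - q (α : ℂ)) = w₀ + (starRingEnd ℂ) w₀ * q (α : ℂ) := by
    have hd := hden (α : ℂ) hαmem
    rw [hq]
    field_simp
    ring
  have h1q : (1 : ℂ) - q (α : ℂ) ≠ 0 := by
    intro hcon
    have : ‖q (α : ℂ)‖ = 1 := by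
      have : q (α : ℂ) = 1 := by linear_combination -hcon
      rw [this]; simp
    rw [← hs] at this
    linarith
  -- real part formula
  have hre_eq : (w (α : ℂ)).re * Complex.normSq (1 - q (α : ℂ)) = β * (1 - Complex.normSq (q (α : ℂ))) := by
    have h2 : (w (α : ℂ) * (1 - q (α : ℂ)) * (starRingEnd ℂ) (1 - q (α : ℂ))).re
        = ((w₀ + (starRingEnd ℂ) w₀ * q (α : ℂ)) * (starRingEnd ℂ) (1 - q (α : ℂ))).re := by
      rw [hkey]
    rw [mul_assoc, Complex.mul_conj] at h2
    set u := q (α : ℂ)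
    simp only [Complex.mul_re, Complex.add_re, Complex.add_im, Complex.mul_im,
      Complex.conj_re, Complex.conj_im, Complex.sub_re, Complex.sub_im, Complex.one_re,
      Complex.one_im, Complex.ofReal_re, Complex.ofReal_im, Complex.normSq_apply, hβ] at h2 ⊢
    linear_combination h2
  -- final inequality
  have hN : 0 < Complex.normSq (1 - q (α : ℂ)) := by
    rw [Complex.normSq_pos]; exact h1q
  have hNle : Complex.normSq (1 - q (α : ℂ)) ≤ (1 + s) ^ 2 := by
    have h3 : ‖1 - q (α : ℂ)‖ ≤ 1 + s := by
      have := norm_sub_le (1 : ℂ) (q (α : ℂ))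
      simpa [hs] using this
    calc Complex.normSq (1 - q (α : ℂ)) = ‖1 - q (α : ℂ)‖ ^ 2 := (Complex.sq_norm _).symm
      _ ≤ (1 + s) ^ 2 := by
          apply pow_le_pow_left₀ (norm_nonneg _) h3
  have hsqeq : Complex.normSq (q (α : ℂ)) = s ^ 2 := by rw [hs, ← Complex.sq_norm]
  rw [hsqeq] at hre_eq
  have hrescue : (w (α : ℂ)).re = β * (1 - s ^ 2) / Complex.normSq (1 - q (α : ℂ)) := by
    rw [eq_div_iff hN.ne']
    linarith [hre_eq]
  rw [hrescue, le_div_iff₀ hN]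
  have hsr : s * r ≤ α := by
    calc s * r ≤ (α / r) * r := by nlinarith
      _ = α := by field_simp
  have h4 : (r - α) * (1 + s) ≤ (1 - s) * (r + α) := by nlinarith
  have h5 : (r - α) / (r + α) * (1 + s) ≤ 1 - s := by
    rw [div_mul_eq_mul_div, div_le_iff₀ (by positivity : (0:ℝ) < r + α)]
    exact h4
  calc β * ((r - α) / (r + α)) * Complex.normSq (1 - q (α : ℂ))
      ≤ β * ((r - α) / (r + α)) * (1 + s) ^ 2 := by
        apply mul_le_mul_of_nonneg_left hNle
        exact mul_nonneg hβ0 (div_nonneg (by linarith) (by positivity))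
    _ = β * ((r - α) / (r + α) * (1 + s)) * (1 + s) := by ring
    _ ≤ β * (1 - s) * (1 + s) := by
        apply mul_le_mul_of_nonneg_right _ (by linarith : (0:ℝ) ≤ 1 + s)
        exact mul_le_mul_of_nonneg_left h5 hβ0
    _ = β * (1 - s ^ 2) := by ring


/-- Explicit Harnack contraction: if `h` is harmonic on the open unit disc with `|h| ≤ 1`
and `|h(0)| ≤ 2α/(1+α)` for a fixed `α ∈ (0,1)`, then `|h(α)| ≤ 4α/(1+α)²`. -/
theorem harnack_disc_contraction (h : ℂ → ℝ)
    (hh : HarmonicOnSet h (Metric.ball (0 : ℂ) 1))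
    (hb : ∀ z ∈ Metric.ball (0 : ℂ) 1, |h z| ≤ 1)
    (α : ℝ) (hα0 : 0 < α) (hα1 : α < 1)
    (h0 : |h 0| ≤ 2 * α / (1 + α)) :
    |h (α : ℂ)| ≤ 4 * α / (1 + α) ^ 2 := by
  set a := 2 * α / (1 + α) with ha
  have hα1' : (0:ℝ) < 1 + α := by linarith
  have ha1 : a < 1 := by
    rw [ha, div_lt_one hα1']; linarith
  have ha0 : 0 ≤ a := by positivity
  -- step 1 : the bound for every r ∈ (α, 1)
  have key : ∀ r ∈ Set.Ioo α 1, |h (α : ℂ)| ≤ 1 - (1 - a) * ((r - α) / (r + α)) := by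
    intro r hrIoo
    obtain ⟨hαr, hr1⟩ := hrIoo
    have hr0 : 0 < r := hα0.trans hαr
    set r' : ℝ := (1 + r) / 2 with hr'
    have hrr' : r < r' := by rw [hr']; linarith
    have hr'1 : r' < 1 := by rw [hr']; linarith
    have hsub : Metric.closedBall (0 : ℂ) r' ⊆ Metric.ball (0 : ℂ) 1 := by
      intro z hz
      rw [Metric.mem_closedBall] at hz
      rw [Metric.mem_ball]
      linarith
    have hsub2 : Metric.ball (0 : ℂ) r ⊆ Metric.ball (0 : ℂ) 1 :=
      Metric.ball_subset_ball (by linarith)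
    -- the holomorphic gradient
    have hgdiff : DifferentiableOn ℂ (gradC h) (Metric.closedBall (0 : ℂ) r') := by
      intro x hx
      obtain ⟨c, hc⟩ := gradC_hasDerivAt h hh (hsub hx)
      exact hc.differentiableAt.differentiableWithinAt
    obtain ⟨F, hF⟩ := exists_primitive hr0 hrr' hgdiff
    -- h = Re F + const on ball 0 r
    have hzero : ∀ x ∈ Metric.ball (0 : ℂ) r,
        HasFDerivAt (fun z => h z - (F z).re) (0 : ℂ →L[ℝ] ℝ) x := by
      intro x hx
      have hx1 : x ∈ Metric.ball (0 : ℂ) 1 := hsub2 hx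
      have hhd : HasFDerivAt h (fderiv ℝ h x) x :=
        (((hh.1.differentiableOn (by norm_num)) x hx1).differentiableAt
          (isOpen_ball.mem_nhds hx1)).hasFDerivAt
      have hFd : HasFDerivAt F
          ((ContinuousLinearMap.smulRight (1 : ℂ →L[ℂ] ℂ) (gradC h x)).restrictScalars ℝ) x :=
        ((hasDerivAt_iff_hasFDerivAt.mp (hF x hx))).restrictScalars ℝ
      have hre : HasFDerivAt (fun z => (F z).re)
          (Complex.reCLM.comp
            ((ContinuousLinearMap.smulRight (1 : ℂ →L[ℂ] ℂ) (gradC h x)).restrictScalars ℝ)) x :=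
        Complex.reCLM.hasFDerivAt.comp x hFd
      have hdiff := hhd.sub hre
      have hzero' : fderiv ℝ h x - Complex.reCLM.comp
          ((ContinuousLinearMap.smulRight (1 : ℂ →L[ℂ] ℂ) (gradC h x)).restrictScalars ℝ) = 0 := by
        apply clm_eq_zero
        · simp [gradC]
        · simp [gradC, Complex.mul_re]
      rwa [hzero'] at hdiff
    have hconst : ∀ z ∈ Metric.ball (0 : ℂ) r,
        h z - (F z).re = h 0 - (F 0).re := by
      intro z hz
      have h0mem : (0 : ℂ) ∈ Metric.ball (0 : ℂ) r := mem_ball_self hr0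
      exact (convex_ball (0 : ℂ) r).is_const_of_fderivWithin_eq_zero
        (fun x hx => (hzero x hx).differentiableAt.differentiableWithinAt)
        (fun x hx => by
          rw [(hzero x hx).hasFDerivWithinAt.fderivWithin
            (isOpen_ball.uniqueDiffWithinAt hx)])
        hz h0mem
    set f : ℂ → ℂ := fun z => F z + ((h 0 - (F 0).re : ℝ) : ℂ) with hf
    have hfd : DifferentiableOn ℂ f (Metric.ball (0 : ℂ) r) := by
      intro x hx
      exact ((hF x hx).differentiableAt.add_const _).differentiableWithinAt
    have hfre : ∀ z ∈ Metric.ball (0 : ℂ) r, (f z).re = h z := by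
      intro z hz
      have := hconst z hz
      simp only [hf, Complex.add_re, Complex.ofReal_re]
      linarith
    -- bounds on h
    have hhb : ∀ z ∈ Metric.ball (0 : ℂ) r, |h z| ≤ 1 := fun z hz => hb z (hsub2 hz)
    have hαmem : (α : ℂ) ∈ Metric.ball (0 : ℂ) r := by
      rw [mem_ball_zero_iff, Complex.norm_real, Real.norm_eq_abs, _root_.abs_of_nonneg hα0.le]
      exact hαr
    have h0mem : (0 : ℂ) ∈ Metric.ball (0 : ℂ) r := mem_ball_self hr0
    -- Harnack for 1 - f
    have H1 : (1 - h 0) * ((r - α) / (r + α)) ≤ 1 - h (α : ℂ) := by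
      have := harnack_halfplane (w := fun z => 1 - f z) hr0
        ((differentiableOn_const _).sub hfd)
        (fun z hz => by
          rw [Complex.sub_re, Complex.one_re, hfre z hz]
          have := abs_le.mp (hhb z hz)
          linarith)
        hα0.le hαr
      beta_reduce at this
      have e0 : (1 - f 0).re = 1 - h 0 := by
        rw [Complex.sub_re, Complex.one_re, hfre 0 h0mem]
      have eα : (1 - f (α : ℂ)).re = 1 - h (α : ℂ) := by
        rw [Complex.sub_re, Complex.one_re, hfre _ hαmem]
      rw [e0, eα] at this
      exact this
    have H2 : (1 + h 0) * ((r - α) / (r + α)) ≤ 1 + h (α : ℂ) := by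
      have := harnack_halfplane (w := fun z => 1 + f z) hr0
        ((differentiableOn_const _).add hfd)
        (fun z hz => by
          rw [Complex.add_re, Complex.one_re, hfre z hz]
          have := abs_le.mp (hhb z hz)
          linarith)
        hα0.le hαr
      beta_reduce at this
      have e0 : (1 + f 0).re = 1 + h 0 := by
        rw [Complex.add_re, Complex.one_re, hfre 0 h0mem]
      have eα : (1 + f (α : ℂ)).re = 1 + h (α : ℂ) := by
        rw [Complex.add_re, Complex.one_re, hfre _ hαmem]
      rw [e0, eα] at this
      exact this
    -- combine
    have hk0 : 0 ≤ (r - α) / (r + α) := div_nonneg (by linarith) (by linarith)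
    obtain ⟨h0l, h0u⟩ := abs_le.mp h0
    rw [abs_le]
    constructor
    · have : (1 - a) * ((r - α) / (r + α)) ≤ (1 + h 0) * ((r - α) / (r + α)) := by
        apply mul_le_mul_of_nonneg_right _ hk0
        linarith
      linarith
    · have : (1 - a) * ((r - α) / (r + α)) ≤ (1 - h 0) * ((r - α) / (r + α)) := by
        apply mul_le_mul_of_nonneg_right _ hk0
        linarith
      linarith
  -- step 2 : take the limit r → 1⁻
  have hlim : Filter.Tendsto (fun r : ℝ => 1 - (1 - a) * ((r - α) / (r + α)))
      (nhdsWithin 1 (Set.Iio 1)) (nhds (4 * α / (1 + α) ^ 2)) := by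
    have hc : ContinuousAt (fun r : ℝ => 1 - (1 - a) * ((r - α) / (r + α))) 1 := by
      apply ContinuousAt.sub continuousAt_const
      apply ContinuousAt.mul continuousAt_const
      exact ContinuousAt.div (by fun_prop) (by fun_prop) (by simp; linarith)
    have hval : 1 - (1 - a) * ((1 - α) / (1 + α)) = 4 * α / (1 + α) ^ 2 := by
      rw [ha]
      field_simp
      ring
    have ht : Filter.Tendsto (fun r : ℝ => 1 - (1 - a) * ((r - α) / (r + α)))
        (nhdsWithin 1 (Set.Iio 1)) (nhds (1 - (1 - a) * ((1 - α) / (1 + α)))) :=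
      hc.tendsto.mono_left nhdsWithin_le_nhds
    rwa [hval] at ht
  refine ge_of_tendsto hlim ?_
  filter_upwards [Ioo_mem_nhdsLT_of_mem (Set.mem_Ioc.mpr ⟨hα1, le_rfl⟩)] with r hr
  exact key r hr
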